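/- The counting function ζ(m,3) of 3-deviation sets satisfies ζ(m,3) = ((2+√2)^⌊(m+1)/2⌋ + (2−√2)^⌊(m+1)/2⌋)/4 for all m ≥ 1. -/

import Mathlib

def aSum (α : List ℕ) (k : ℕ) : ℤ := ∑ i ∈ Finset.range k, (-1:ℤ)^i * (α.getD i 0 : ℤ)

def Good : ℤ → List ℕ → Prop
  | s, [] => |s| ≤ 1
  | s, a :: l => 0 < a ∧ |s + (a:ℤ)| ≤ 3 ∧ Good (-(s + (a:ℤ))) l

/-- `α` is a `δ`-deviation set of size `m`: a finite sequence of positive integers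
summing to `m`, whose total alternating sum has absolute value at most `1`,
and all of whose partial alternating sums have absolute value at most `δ`. -/
def IsDevSet (m δ : ℕ) (α : List ℕ) : Prop :=
  (∀ a ∈ α, 0 < a) ∧ α.sum = m ∧
  |∑ i ∈ Finset.range α.length, (-1 : ℤ) ^ i * (α.getD i 0 : ℤ)| ≤ 1 ∧
  ∀ k : ℕ, |∑ i ∈ Finset.range k, (-1 : ℤ) ^ i * (α.getD i 0 : ℤ)| ≤ (δ : ℤ)

/-- `zeta m δ` is the number of `δ`-deviation sets of size `m`. -/
noncomputable def zeta (m δ : ℕ) : ℕ := Nat.card {α : List ℕ // IsDevSet m δ α}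



def P : ℕ → ℤ → Finset (List ℕ)
  | 0, s => if |s| ≤ 1 then {[]} else ∅
  | (m+1), s => (Finset.Icc 1 6).attach.biUnion fun k =>
      if (k:ℕ) ≤ m+1 ∧ |s + ((k:ℕ):ℤ)| ≤ 3 then
        (P (m+1-(k:ℕ)) (-(s+((k:ℕ):ℤ)))).image ((k:ℕ) :: ·) else ∅
  termination_by m _ => m
  decreasing_by
    obtain ⟨k, hk⟩ := k
    simp only [Finset.mem_Icc] at hk
    simp only []
    omega

lemma cP_zero (s : ℤ) : (P 0 s).card = if |s| ≤ 1 then 1 else 0 := by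
  rw [P.eq_def]; split_ifs with h <;> simp [h]

lemma cP_succ (m : ℕ) (s : ℤ) : (P (m+1) s).card =
    ∑ k ∈ Finset.Icc 1 6, (if k ≤ m+1 ∧ |s + (k:ℤ)| ≤ 3 then (P (m+1-k) (-(s+(k:ℤ)))).card else 0) := by
  rw [P.eq_def]
  rw [Finset.card_biUnion]
  · rw [← Finset.sum_attach (Finset.Icc 1 6)
      (fun k => if k ≤ m+1 ∧ |s + (k:ℤ)| ≤ 3 then (P (m+1-k) (-(s+(k:ℤ)))).card else 0)]
    refine Finset.sum_congr rfl fun k _ => ?_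
    split_ifs with h
    · exact Finset.card_image_of_injective _ (List.cons_injective)
    · simp
  · intro x _ y _ hxy
    dsimp only [Function.onFun]
    rw [Finset.disjoint_left]
    intro a hax hay
    apply hxy
    split_ifs at hax hay with h1 h2
    · simp only [Finset.mem_image] at hax hay
      obtain ⟨l1, _, rfl⟩ := hax
      obtain ⟨l2, _, he⟩ := hay
      exact Subtype.ext (by injection he.symm)
    all_goals simp at hax hay

lemma v1_m3 : (P 1 (-3)).card = 0 := by
  rw [show (1:ℕ) = 0+1 from rfl, cP_succ]
  norm_num [Finset.sum_Icc_succ_top, cP_zero]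

lemma v1_m2 : (P 1 (-2)).card = 1 := by
  rw [show (1:ℕ) = 0+1 from rfl, cP_succ]
  norm_num [Finset.sum_Icc_succ_top, cP_zero, v1_m3]

lemma v1_m1 : (P 1 (-1)).card = 1 := by
  rw [show (1:ℕ) = 0+1 from rfl, cP_succ]
  norm_num [Finset.sum_Icc_succ_top, cP_zero, v1_m3, v1_m2]

lemma v1_0 : (P 1 0).card = 1 := by
  rw [show (1:ℕ) = 0+1 from rfl, cP_succ]
  norm_num [Finset.sum_Icc_succ_top, cP_zero, v1_m3, v1_m2, v1_m1]

lemma v1_1 : (P 1 1).card = 0 := by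
  rw [show (1:ℕ) = 0+1 from rfl, cP_succ]
  norm_num [Finset.sum_Icc_succ_top, cP_zero, v1_m3, v1_m2, v1_m1, v1_0]

lemma v1_2 : (P 1 2).card = 0 := by
  rw [show (1:ℕ) = 0+1 from rfl, cP_succ]
  norm_num [Finset.sum_Icc_succ_top, cP_zero, v1_m3, v1_m2, v1_m1, v1_0, v1_1]

lemma v1_3 : (P 1 3).card = 0 := by
  rw [show (1:ℕ) = 0+1 from rfl, cP_succ]
  norm_num [Finset.sum_Icc_succ_top, cP_zero, v1_m3, v1_m2, v1_m1, v1_0, v1_1, v1_2]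

lemma v2_m3 : (P 2 (-3)).card = 1 := by
  rw [show (2:ℕ) = 1+1 from rfl, cP_succ]
  norm_num [Finset.sum_Icc_succ_top, cP_zero, v1_m3, v1_m2, v1_m1, v1_0, v1_1, v1_2, v1_3]

lemma v2_m2 : (P 2 (-2)).card = 1 := by
  rw [show (2:ℕ) = 1+1 from rfl, cP_succ]
  norm_num [Finset.sum_Icc_succ_top, cP_zero, v1_m3, v1_m2, v1_m1, v1_0, v1_1, v1_2, v1_3, v2_m3]

lemma v2_m1 : (P 2 (-1)).card = 2 := by
  rw [show (2:ℕ) = 1+1 from rfl, cP_succ]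
  norm_num [Finset.sum_Icc_succ_top, cP_zero, v1_m3, v1_m2, v1_m1, v1_0, v1_1, v1_2, v1_3, v2_m3, v2_m2]

lemma v2_0 : (P 2 0).card = 1 := by
  rw [show (2:ℕ) = 1+1 from rfl, cP_succ]
  norm_num [Finset.sum_Icc_succ_top, cP_zero, v1_m3, v1_m2, v1_m1, v1_0, v1_1, v1_2, v1_3, v2_m3, v2_m2, v2_m1]

lemma v2_1 : (P 2 1).card = 1 := by
  rw [show (2:ℕ) = 1+1 from rfl, cP_succ]
  norm_num [Finset.sum_Icc_succ_top, cP_zero, v1_m3, v1_m2, v1_m1, v1_0, v1_1, v1_2, v1_3, v2_m3, v2_m2, v2_m1, v2_0]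

lemma v2_2 : (P 2 2).card = 0 := by
  rw [show (2:ℕ) = 1+1 from rfl, cP_succ]
  norm_num [Finset.sum_Icc_succ_top, cP_zero, v1_m3, v1_m2, v1_m1, v1_0, v1_1, v1_2, v1_3, v2_m3, v2_m2, v2_m1, v2_0, v2_1]

lemma v2_3 : (P 2 3).card = 0 := by
  rw [show (2:ℕ) = 1+1 from rfl, cP_succ]
  norm_num [Finset.sum_Icc_succ_top, cP_zero, v1_m3, v1_m2, v1_m1, v1_0, v1_1, v1_2, v1_3, v2_m3, v2_m2, v2_m1, v2_0, v2_1, v2_2]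

lemma v3_m3 : (P 3 (-3)).card = 1 := by
  rw [show (3:ℕ) = 2+1 from rfl, cP_succ]
  norm_num [Finset.sum_Icc_succ_top, cP_zero, v1_m3, v1_m2, v1_m1, v1_0, v1_1, v1_2, v1_3, v2_m3, v2_m2, v2_m1, v2_0, v2_1, v2_2, v2_3]

lemma v3_m2 : (P 3 (-2)).card = 3 := by
  rw [show (3:ℕ) = 2+1 from rfl, cP_succ]
  norm_num [Finset.sum_Icc_succ_top, cP_zero, v1_m3, v1_m2, v1_m1, v1_0, v1_1, v1_2, v1_3, v2_m3, v2_m2, v2_m1, v2_0, v2_1, v2_2, v2_3, v3_m3]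

lemma v3_m1 : (P 3 (-1)).card = 2 := by
  rw [show (3:ℕ) = 2+1 from rfl, cP_succ]
  norm_num [Finset.sum_Icc_succ_top, cP_zero, v1_m3, v1_m2, v1_m1, v1_0, v1_1, v1_2, v1_3, v2_m3, v2_m2, v2_m1, v2_0, v2_1, v2_2, v2_3, v3_m3, v3_m2]

lemma v3_0 : (P 3 0).card = 3 := by
  rw [show (3:ℕ) = 2+1 from rfl, cP_succ]
  norm_num [Finset.sum_Icc_succ_top, cP_zero, v1_m3, v1_m2, v1_m1, v1_0, v1_1, v1_2, v1_3, v2_m3, v2_m2, v2_m1, v2_0, v2_1, v2_2, v2_3, v3_m3, v3_m2, v3_m1]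

lemma v3_1 : (P 3 1).card = 1 := by
  rw [show (3:ℕ) = 2+1 from rfl, cP_succ]
  norm_num [Finset.sum_Icc_succ_top, cP_zero, v1_m3, v1_m2, v1_m1, v1_0, v1_1, v1_2, v1_3, v2_m3, v2_m2, v2_m1, v2_0, v2_1, v2_2, v2_3, v3_m3, v3_m2, v3_m1, v3_0]

lemma v3_2 : (P 3 2).card = 1 := by
  rw [show (3:ℕ) = 2+1 from rfl, cP_succ]
  norm_num [Finset.sum_Icc_succ_top, cP_zero, v1_m3, v1_m2, v1_m1, v1_0, v1_1, v1_2, v1_3, v2_m3, v2_m2, v2_m1, v2_0, v2_1, v2_2, v2_3, v3_m3, v3_m2, v3_m1, v3_0, v3_1]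

lemma v3_3 : (P 3 3).card = 0 := by
  rw [show (3:ℕ) = 2+1 from rfl, cP_succ]
  norm_num [Finset.sum_Icc_succ_top, cP_zero, v1_m3, v1_m2, v1_m1, v1_0, v1_1, v1_2, v1_3, v2_m3, v2_m2, v2_m1, v2_0, v2_1, v2_2, v2_3, v3_m3, v3_m2, v3_m1, v3_0, v3_1, v3_2]

lemma v4_m3 : (P 4 (-3)).card = 4 := by
  rw [show (4:ℕ) = 3+1 from rfl, cP_succ]
  norm_num [Finset.sum_Icc_succ_top, cP_zero, v1_m3, v1_m2, v1_m1, v1_0, v1_1, v1_2, v1_3, v2_m3, v2_m2, v2_m1, v2_0, v2_1, v2_2, v2_3, v3_m3, v3_m2, v3_m1, v3_0, v3_1, v3_2, v3_3]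

lemma v4_m2 : (P 4 (-2)).card = 3 := by
  rw [show (4:ℕ) = 3+1 from rfl, cP_succ]
  norm_num [Finset.sum_Icc_succ_top, cP_zero, v1_m3, v1_m2, v1_m1, v1_0, v1_1, v1_2, v1_3, v2_m3, v2_m2, v2_m1, v2_0, v2_1, v2_2, v2_3, v3_m3, v3_m2, v3_m1, v3_0, v3_1, v3_2, v3_3, v4_m3]

lemma v4_m1 : (P 4 (-1)).card = 6 := by
  rw [show (4:ℕ) = 3+1 from rfl, cP_succ]
  norm_num [Finset.sum_Icc_succ_top, cP_zero, v1_m3, v1_m2, v1_m1, v1_0, v1_1, v1_2, v1_3, v2_m3, v2_m2, v2_m1, v2_0, v2_1, v2_2, v2_3, v3_m3, v3_m2, v3_m1, v3_0, v3_1, v3_2, v3_3, v4_m3, v4_m2]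

lemma v4_0 : (P 4 0).card = 3 := by
  rw [show (4:ℕ) = 3+1 from rfl, cP_succ]
  norm_num [Finset.sum_Icc_succ_top, cP_zero, v1_m3, v1_m2, v1_m1, v1_0, v1_1, v1_2, v1_3, v2_m3, v2_m2, v2_m1, v2_0, v2_1, v2_2, v2_3, v3_m3, v3_m2, v3_m1, v3_0, v3_1, v3_2, v3_3, v4_m3, v4_m2, v4_m1]

lemma v4_1 : (P 4 1).card = 4 := by
  rw [show (4:ℕ) = 3+1 from rfl, cP_succ]
  norm_num [Finset.sum_Icc_succ_top, cP_zero, v1_m3, v1_m2, v1_m1, v1_0, v1_1, v1_2, v1_3, v2_m3, v2_m2, v2_m1, v2_0, v2_1, v2_2, v2_3, v3_m3, v3_m2, v3_m1, v3_0, v3_1, v3_2, v3_3, v4_m3, v4_m2, v4_m1, v4_0]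

lemma v4_2 : (P 4 2).card = 1 := by
  rw [show (4:ℕ) = 3+1 from rfl, cP_succ]
  norm_num [Finset.sum_Icc_succ_top, cP_zero, v1_m3, v1_m2, v1_m1, v1_0, v1_1, v1_2, v1_3, v2_m3, v2_m2, v2_m1, v2_0, v2_1, v2_2, v2_3, v3_m3, v3_m2, v3_m1, v3_0, v3_1, v3_2, v3_3, v4_m3, v4_m2, v4_m1, v4_0, v4_1]

lemma v4_3 : (P 4 3).card = 0 := by
  rw [show (4:ℕ) = 3+1 from rfl, cP_succ]
  norm_num [Finset.sum_Icc_succ_top, cP_zero, v1_m3, v1_m2, v1_m1, v1_0, v1_1, v1_2, v1_3, v2_m3, v2_m2, v2_m1, v2_0, v2_1, v2_2, v2_3, v3_m3, v3_m2, v3_m1, v3_0, v3_1, v3_2, v3_3, v4_m3, v4_m2, v4_m1, v4_0, v4_1, v4_2]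

lemma v5_m3 : (P 5 (-3)).card = 4 := by
  rw [show (5:ℕ) = 4+1 from rfl, cP_succ]
  norm_num [Finset.sum_Icc_succ_top, cP_zero, v1_m3, v1_m2, v1_m1, v1_0, v1_1, v1_2, v1_3, v2_m3, v2_m2, v2_m1, v2_0, v2_1, v2_2, v2_3, v3_m3, v3_m2, v3_m1, v3_0, v3_1, v3_2, v3_3, v4_m3, v4_m2, v4_m1, v4_0, v4_1, v4_2, v4_3]

lemma v5_m2 : (P 5 (-2)).card = 10 := by
  rw [show (5:ℕ) = 4+1 from rfl, cP_succ]
  norm_num [Finset.sum_Icc_succ_top, cP_zero, v1_m3, v1_m2, v1_m1, v1_0, v1_1, v1_2, v1_3, v2_m3, v2_m2, v2_m1, v2_0, v2_1, v2_2, v2_3, v3_m3, v3_m2, v3_m1, v3_0, v3_1, v3_2, v3_3, v4_m3, v4_m2, v4_m1, v4_0, v4_1, v4_2, v4_3, v5_m3]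

lemma v5_m1 : (P 5 (-1)).card = 6 := by
  rw [show (5:ℕ) = 4+1 from rfl, cP_succ]
  norm_num [Finset.sum_Icc_succ_top, cP_zero, v1_m3, v1_m2, v1_m1, v1_0, v1_1, v1_2, v1_3, v2_m3, v2_m2, v2_m1, v2_0, v2_1, v2_2, v2_3, v3_m3, v3_m2, v3_m1, v3_0, v3_1, v3_2, v3_3, v4_m3, v4_m2, v4_m1, v4_0, v4_1, v4_2, v4_3, v5_m3, v5_m2]

lemma v5_0 : (P 5 0).card = 10 := by
  rw [show (5:ℕ) = 4+1 from rfl, cP_succ]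
  norm_num [Finset.sum_Icc_succ_top, cP_zero, v1_m3, v1_m2, v1_m1, v1_0, v1_1, v1_2, v1_3, v2_m3, v2_m2, v2_m1, v2_0, v2_1, v2_2, v2_3, v3_m3, v3_m2, v3_m1, v3_0, v3_1, v3_2, v3_3, v4_m3, v4_m2, v4_m1, v4_0, v4_1, v4_2, v4_3, v5_m3, v5_m2, v5_m1]

lemma v5_1 : (P 5 1).card = 4 := by
  rw [show (5:ℕ) = 4+1 from rfl, cP_succ]
  norm_num [Finset.sum_Icc_succ_top, cP_zero, v1_m3, v1_m2, v1_m1, v1_0, v1_1, v1_2, v1_3, v2_m3, v2_m2, v2_m1, v2_0, v2_1, v2_2, v2_3, v3_m3, v3_m2, v3_m1, v3_0, v3_1, v3_2, v3_3, v4_m3, v4_m2, v4_m1, v4_0, v4_1, v4_2, v4_3, v5_m3, v5_m2, v5_m1, v5_0]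

lemma v5_2 : (P 5 2).card = 4 := by
  rw [show (5:ℕ) = 4+1 from rfl, cP_succ]
  norm_num [Finset.sum_Icc_succ_top, cP_zero, v1_m3, v1_m2, v1_m1, v1_0, v1_1, v1_2, v1_3, v2_m3, v2_m2, v2_m1, v2_0, v2_1, v2_2, v2_3, v3_m3, v3_m2, v3_m1, v3_0, v3_1, v3_2, v3_3, v4_m3, v4_m2, v4_m1, v4_0, v4_1, v4_2, v4_3, v5_m3, v5_m2, v5_m1, v5_0, v5_1]

lemma v5_3 : (P 5 3).card = 0 := by
  rw [show (5:ℕ) = 4+1 from rfl, cP_succ]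
  norm_num [Finset.sum_Icc_succ_top, cP_zero, v1_m3, v1_m2, v1_m1, v1_0, v1_1, v1_2, v1_3, v2_m3, v2_m2, v2_m1, v2_0, v2_1, v2_2, v2_3, v3_m3, v3_m2, v3_m1, v3_0, v3_1, v3_2, v3_3, v4_m3, v4_m2, v4_m1, v4_0, v4_1, v4_2, v4_3, v5_m3, v5_m2, v5_m1, v5_0, v5_1, v5_2]

lemma v6_m3 : (P 6 (-3)).card = 14 := by
  rw [show (6:ℕ) = 5+1 from rfl, cP_succ]
  norm_num [Finset.sum_Icc_succ_top, cP_zero, v1_m3, v1_m2, v1_m1, v1_0, v1_1, v1_2, v1_3, v2_m3, v2_m2, v2_m1, v2_0, v2_1, v2_2, v2_3, v3_m3, v3_m2, v3_m1, v3_0, v3_1, v3_2, v3_3, v4_m3, v4_m2, v4_m1, v4_0, v4_1, v4_2, v4_3, v5_m3, v5_m2, v5_m1, v5_0, v5_1, v5_2, v5_3]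

lemma v6_m2 : (P 6 (-2)).card = 10 := by
  rw [show (6:ℕ) = 5+1 from rfl, cP_succ]
  norm_num [Finset.sum_Icc_succ_top, cP_zero, v1_m3, v1_m2, v1_m1, v1_0, v1_1, v1_2, v1_3, v2_m3, v2_m2, v2_m1, v2_0, v2_1, v2_2, v2_3, v3_m3, v3_m2, v3_m1, v3_0, v3_1, v3_2, v3_3, v4_m3, v4_m2, v4_m1, v4_0, v4_1, v4_2, v4_3, v5_m3, v5_m2, v5_m1, v5_0, v5_1, v5_2, v5_3, v6_m3]

lemma v6_m1 : (P 6 (-1)).card = 20 := by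
  rw [show (6:ℕ) = 5+1 from rfl, cP_succ]
  norm_num [Finset.sum_Icc_succ_top, cP_zero, v1_m3, v1_m2, v1_m1, v1_0, v1_1, v1_2, v1_3, v2_m3, v2_m2, v2_m1, v2_0, v2_1, v2_2, v2_3, v3_m3, v3_m2, v3_m1, v3_0, v3_1, v3_2, v3_3, v4_m3, v4_m2, v4_m1, v4_0, v4_1, v4_2, v4_3, v5_m3, v5_m2, v5_m1, v5_0, v5_1, v5_2, v5_3, v6_m3, v6_m2]

lemma v6_0 : (P 6 0).card = 10 := by
  rw [show (6:ℕ) = 5+1 from rfl, cP_succ]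
  norm_num [Finset.sum_Icc_succ_top, cP_zero, v1_m3, v1_m2, v1_m1, v1_0, v1_1, v1_2, v1_3, v2_m3, v2_m2, v2_m1, v2_0, v2_1, v2_2, v2_3, v3_m3, v3_m2, v3_m1, v3_0, v3_1, v3_2, v3_3, v4_m3, v4_m2, v4_m1, v4_0, v4_1, v4_2, v4_3, v5_m3, v5_m2, v5_m1, v5_0, v5_1, v5_2, v5_3, v6_m3, v6_m2, v6_m1]

lemma v6_1 : (P 6 1).card = 14 := by
  rw [show (6:ℕ) = 5+1 from rfl, cP_succ]
  norm_num [Finset.sum_Icc_succ_top, cP_zero, v1_m3, v1_m2, v1_m1, v1_0, v1_1, v1_2, v1_3, v2_m3, v2_m2, v2_m1, v2_0, v2_1, v2_2, v2_3, v3_m3, v3_m2, v3_m1, v3_0, v3_1, v3_2, v3_3, v4_m3, v4_m2, v4_m1, v4_0, v4_1, v4_2, v4_3, v5_m3, v5_m2, v5_m1, v5_0, v5_1, v5_2, v5_3, v6_m3, v6_m2, v6_m1, v6_0]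

lemma v6_2 : (P 6 2).card = 4 := by
  rw [show (6:ℕ) = 5+1 from rfl, cP_succ]
  norm_num [Finset.sum_Icc_succ_top, cP_zero, v1_m3, v1_m2, v1_m1, v1_0, v1_1, v1_2, v1_3, v2_m3, v2_m2, v2_m1, v2_0, v2_1, v2_2, v2_3, v3_m3, v3_m2, v3_m1, v3_0, v3_1, v3_2, v3_3, v4_m3, v4_m2, v4_m1, v4_0, v4_1, v4_2, v4_3, v5_m3, v5_m2, v5_m1, v5_0, v5_1, v5_2, v5_3, v6_m3, v6_m2, v6_m1, v6_0, v6_1]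

lemma v6_3 : (P 6 3).card = 0 := by
  rw [show (6:ℕ) = 5+1 from rfl, cP_succ]
  norm_num [Finset.sum_Icc_succ_top, cP_zero, v1_m3, v1_m2, v1_m1, v1_0, v1_1, v1_2, v1_3, v2_m3, v2_m2, v2_m1, v2_0, v2_1, v2_2, v2_3, v3_m3, v3_m2, v3_m1, v3_0, v3_1, v3_2, v3_3, v4_m3, v4_m2, v4_m1, v4_0, v4_1, v4_2, v4_3, v5_m3, v5_m2, v5_m1, v5_0, v5_1, v5_2, v5_3, v6_m3, v6_m2, v6_m1, v6_0, v6_1, v6_2]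

lemma v7_m3 : (P 7 (-3)).card = 14 := by
  rw [show (7:ℕ) = 6+1 from rfl, cP_succ]
  norm_num [Finset.sum_Icc_succ_top, cP_zero, v1_m3, v1_m2, v1_m1, v1_0, v1_1, v1_2, v1_3, v2_m3, v2_m2, v2_m1, v2_0, v2_1, v2_2, v2_3, v3_m3, v3_m2, v3_m1, v3_0, v3_1, v3_2, v3_3, v4_m3, v4_m2, v4_m1, v4_0, v4_1, v4_2, v4_3, v5_m3, v5_m2, v5_m1, v5_0, v5_1, v5_2, v5_3, v6_m3, v6_m2, v6_m1, v6_0, v6_1, v6_2, v6_3]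

lemma v7_m2 : (P 7 (-2)).card = 34 := by
  rw [show (7:ℕ) = 6+1 from rfl, cP_succ]
  norm_num [Finset.sum_Icc_succ_top, cP_zero, v1_m3, v1_m2, v1_m1, v1_0, v1_1, v1_2, v1_3, v2_m3, v2_m2, v2_m1, v2_0, v2_1, v2_2, v2_3, v3_m3, v3_m2, v3_m1, v3_0, v3_1, v3_2, v3_3, v4_m3, v4_m2, v4_m1, v4_0, v4_1, v4_2, v4_3, v5_m3, v5_m2, v5_m1, v5_0, v5_1, v5_2, v5_3, v6_m3, v6_m2, v6_m1, v6_0, v6_1, v6_2, v6_3, v7_m3]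

lemma v7_m1 : (P 7 (-1)).card = 20 := by
  rw [show (7:ℕ) = 6+1 from rfl, cP_succ]
  norm_num [Finset.sum_Icc_succ_top, cP_zero, v1_m3, v1_m2, v1_m1, v1_0, v1_1, v1_2, v1_3, v2_m3, v2_m2, v2_m1, v2_0, v2_1, v2_2, v2_3, v3_m3, v3_m2, v3_m1, v3_0, v3_1, v3_2, v3_3, v4_m3, v4_m2, v4_m1, v4_0, v4_1, v4_2, v4_3, v5_m3, v5_m2, v5_m1, v5_0, v5_1, v5_2, v5_3, v6_m3, v6_m2, v6_m1, v6_0, v6_1, v6_2, v6_3, v7_m3, v7_m2]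

lemma v7_0 : (P 7 0).card = 34 := by
  rw [show (7:ℕ) = 6+1 from rfl, cP_succ]
  norm_num [Finset.sum_Icc_succ_top, cP_zero, v1_m3, v1_m2, v1_m1, v1_0, v1_1, v1_2, v1_3, v2_m3, v2_m2, v2_m1, v2_0, v2_1, v2_2, v2_3, v3_m3, v3_m2, v3_m1, v3_0, v3_1, v3_2, v3_3, v4_m3, v4_m2, v4_m1, v4_0, v4_1, v4_2, v4_3, v5_m3, v5_m2, v5_m1, v5_0, v5_1, v5_2, v5_3, v6_m3, v6_m2, v6_m1, v6_0, v6_1, v6_2, v6_3, v7_m3, v7_m2, v7_m1]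

lemma v7_1 : (P 7 1).card = 14 := by
  rw [show (7:ℕ) = 6+1 from rfl, cP_succ]
  norm_num [Finset.sum_Icc_succ_top, cP_zero, v1_m3, v1_m2, v1_m1, v1_0, v1_1, v1_2, v1_3, v2_m3, v2_m2, v2_m1, v2_0, v2_1, v2_2, v2_3, v3_m3, v3_m2, v3_m1, v3_0, v3_1, v3_2, v3_3, v4_m3, v4_m2, v4_m1, v4_0, v4_1, v4_2, v4_3, v5_m3, v5_m2, v5_m1, v5_0, v5_1, v5_2, v5_3, v6_m3, v6_m2, v6_m1, v6_0, v6_1, v6_2, v6_3, v7_m3, v7_m2, v7_m1, v7_0]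

lemma v7_2 : (P 7 2).card = 14 := by
  rw [show (7:ℕ) = 6+1 from rfl, cP_succ]
  norm_num [Finset.sum_Icc_succ_top, cP_zero, v1_m3, v1_m2, v1_m1, v1_0, v1_1, v1_2, v1_3, v2_m3, v2_m2, v2_m1, v2_0, v2_1, v2_2, v2_3, v3_m3, v3_m2, v3_m1, v3_0, v3_1, v3_2, v3_3, v4_m3, v4_m2, v4_m1, v4_0, v4_1, v4_2, v4_3, v5_m3, v5_m2, v5_m1, v5_0, v5_1, v5_2, v5_3, v6_m3, v6_m2, v6_m1, v6_0, v6_1, v6_2, v6_3, v7_m3, v7_m2, v7_m1, v7_0, v7_1]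

lemma v7_3 : (P 7 3).card = 0 := by
  rw [show (7:ℕ) = 6+1 from rfl, cP_succ]
  norm_num [Finset.sum_Icc_succ_top, cP_zero, v1_m3, v1_m2, v1_m1, v1_0, v1_1, v1_2, v1_3, v2_m3, v2_m2, v2_m1, v2_0, v2_1, v2_2, v2_3, v3_m3, v3_m2, v3_m1, v3_0, v3_1, v3_2, v3_3, v4_m3, v4_m2, v4_m1, v4_0, v4_1, v4_2, v4_3, v5_m3, v5_m2, v5_m1, v5_0, v5_1, v5_2, v5_3, v6_m3, v6_m2, v6_m1, v6_0, v6_1, v6_2, v6_3, v7_m3, v7_m2, v7_m1, v7_0, v7_1, v7_2]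

lemma v8_m3 : (P 8 (-3)).card = 48 := by
  rw [show (8:ℕ) = 7+1 from rfl, cP_succ]
  norm_num [Finset.sum_Icc_succ_top, cP_zero, v1_m3, v1_m2, v1_m1, v1_0, v1_1, v1_2, v1_3, v2_m3, v2_m2, v2_m1, v2_0, v2_1, v2_2, v2_3, v3_m3, v3_m2, v3_m1, v3_0, v3_1, v3_2, v3_3, v4_m3, v4_m2, v4_m1, v4_0, v4_1, v4_2, v4_3, v5_m3, v5_m2, v5_m1, v5_0, v5_1, v5_2, v5_3, v6_m3, v6_m2, v6_m1, v6_0, v6_1, v6_2, v6_3, v7_m3, v7_m2, v7_m1, v7_0, v7_1, v7_2, v7_3]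

lemma v8_m2 : (P 8 (-2)).card = 34 := by
  rw [show (8:ℕ) = 7+1 from rfl, cP_succ]
  norm_num [Finset.sum_Icc_succ_top, cP_zero, v1_m3, v1_m2, v1_m1, v1_0, v1_1, v1_2, v1_3, v2_m3, v2_m2, v2_m1, v2_0, v2_1, v2_2, v2_3, v3_m3, v3_m2, v3_m1, v3_0, v3_1, v3_2, v3_3, v4_m3, v4_m2, v4_m1, v4_0, v4_1, v4_2, v4_3, v5_m3, v5_m2, v5_m1, v5_0, v5_1, v5_2, v5_3, v6_m3, v6_m2, v6_m1, v6_0, v6_1, v6_2, v6_3, v7_m3, v7_m2, v7_m1, v7_0, v7_1, v7_2, v7_3, v8_m3]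

lemma v8_m1 : (P 8 (-1)).card = 68 := by
  rw [show (8:ℕ) = 7+1 from rfl, cP_succ]
  norm_num [Finset.sum_Icc_succ_top, cP_zero, v1_m3, v1_m2, v1_m1, v1_0, v1_1, v1_2, v1_3, v2_m3, v2_m2, v2_m1, v2_0, v2_1, v2_2, v2_3, v3_m3, v3_m2, v3_m1, v3_0, v3_1, v3_2, v3_3, v4_m3, v4_m2, v4_m1, v4_0, v4_1, v4_2, v4_3, v5_m3, v5_m2, v5_m1, v5_0, v5_1, v5_2, v5_3, v6_m3, v6_m2, v6_m1, v6_0, v6_1, v6_2, v6_3, v7_m3, v7_m2, v7_m1, v7_0, v7_1, v7_2, v7_3, v8_m3, v8_m2]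

lemma v8_0 : (P 8 0).card = 34 := by
  rw [show (8:ℕ) = 7+1 from rfl, cP_succ]
  norm_num [Finset.sum_Icc_succ_top, cP_zero, v1_m3, v1_m2, v1_m1, v1_0, v1_1, v1_2, v1_3, v2_m3, v2_m2, v2_m1, v2_0, v2_1, v2_2, v2_3, v3_m3, v3_m2, v3_m1, v3_0, v3_1, v3_2, v3_3, v4_m3, v4_m2, v4_m1, v4_0, v4_1, v4_2, v4_3, v5_m3, v5_m2, v5_m1, v5_0, v5_1, v5_2, v5_3, v6_m3, v6_m2, v6_m1, v6_0, v6_1, v6_2, v6_3, v7_m3, v7_m2, v7_m1, v7_0, v7_1, v7_2, v7_3, v8_m3, v8_m2, v8_m1]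

lemma v8_1 : (P 8 1).card = 48 := by
  rw [show (8:ℕ) = 7+1 from rfl, cP_succ]
  norm_num [Finset.sum_Icc_succ_top, cP_zero, v1_m3, v1_m2, v1_m1, v1_0, v1_1, v1_2, v1_3, v2_m3, v2_m2, v2_m1, v2_0, v2_1, v2_2, v2_3, v3_m3, v3_m2, v3_m1, v3_0, v3_1, v3_2, v3_3, v4_m3, v4_m2, v4_m1, v4_0, v4_1, v4_2, v4_3, v5_m3, v5_m2, v5_m1, v5_0, v5_1, v5_2, v5_3, v6_m3, v6_m2, v6_m1, v6_0, v6_1, v6_2, v6_3, v7_m3, v7_m2, v7_m1, v7_0, v7_1, v7_2, v7_3, v8_m3, v8_m2, v8_m1, v8_0]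

lemma v8_2 : (P 8 2).card = 14 := by
  rw [show (8:ℕ) = 7+1 from rfl, cP_succ]
  norm_num [Finset.sum_Icc_succ_top, cP_zero, v1_m3, v1_m2, v1_m1, v1_0, v1_1, v1_2, v1_3, v2_m3, v2_m2, v2_m1, v2_0, v2_1, v2_2, v2_3, v3_m3, v3_m2, v3_m1, v3_0, v3_1, v3_2, v3_3, v4_m3, v4_m2, v4_m1, v4_0, v4_1, v4_2, v4_3, v5_m3, v5_m2, v5_m1, v5_0, v5_1, v5_2, v5_3, v6_m3, v6_m2, v6_m1, v6_0, v6_1, v6_2, v6_3, v7_m3, v7_m2, v7_m1, v7_0, v7_1, v7_2, v7_3, v8_m3, v8_m2, v8_m1, v8_0, v8_1]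

lemma v8_3 : (P 8 3).card = 0 := by
  rw [show (8:ℕ) = 7+1 from rfl, cP_succ]
  norm_num [Finset.sum_Icc_succ_top, cP_zero, v1_m3, v1_m2, v1_m1, v1_0, v1_1, v1_2, v1_3, v2_m3, v2_m2, v2_m1, v2_0, v2_1, v2_2, v2_3, v3_m3, v3_m2, v3_m1, v3_0, v3_1, v3_2, v3_3, v4_m3, v4_m2, v4_m1, v4_0, v4_1, v4_2, v4_3, v5_m3, v5_m2, v5_m1, v5_0, v5_1, v5_2, v5_3, v6_m3, v6_m2, v6_m1, v6_0, v6_1, v6_2, v6_3, v7_m3, v7_m2, v7_m1, v7_0, v7_1, v7_2, v7_3, v8_m3, v8_m2, v8_m1, v8_0, v8_1, v8_2]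

lemma v9_m3 : (P 9 (-3)).card = 48 := by
  rw [show (9:ℕ) = 8+1 from rfl, cP_succ]
  norm_num [Finset.sum_Icc_succ_top, cP_zero, v1_m3, v1_m2, v1_m1, v1_0, v1_1, v1_2, v1_3, v2_m3, v2_m2, v2_m1, v2_0, v2_1, v2_2, v2_3, v3_m3, v3_m2, v3_m1, v3_0, v3_1, v3_2, v3_3, v4_m3, v4_m2, v4_m1, v4_0, v4_1, v4_2, v4_3, v5_m3, v5_m2, v5_m1, v5_0, v5_1, v5_2, v5_3, v6_m3, v6_m2, v6_m1, v6_0, v6_1, v6_2, v6_3, v7_m3, v7_m2, v7_m1, v7_0, v7_1, v7_2, v7_3, v8_m3, v8_m2, v8_m1, v8_0, v8_1, v8_2, v8_3]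

lemma v9_m2 : (P 9 (-2)).card = 116 := by
  rw [show (9:ℕ) = 8+1 from rfl, cP_succ]
  norm_num [Finset.sum_Icc_succ_top, cP_zero, v1_m3, v1_m2, v1_m1, v1_0, v1_1, v1_2, v1_3, v2_m3, v2_m2, v2_m1, v2_0, v2_1, v2_2, v2_3, v3_m3, v3_m2, v3_m1, v3_0, v3_1, v3_2, v3_3, v4_m3, v4_m2, v4_m1, v4_0, v4_1, v4_2, v4_3, v5_m3, v5_m2, v5_m1, v5_0, v5_1, v5_2, v5_3, v6_m3, v6_m2, v6_m1, v6_0, v6_1, v6_2, v6_3, v7_m3, v7_m2, v7_m1, v7_0, v7_1, v7_2, v7_3, v8_m3, v8_m2, v8_m1, v8_0, v8_1, v8_2, v8_3, v9_m3]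

lemma v9_m1 : (P 9 (-1)).card = 68 := by
  rw [show (9:ℕ) = 8+1 from rfl, cP_succ]
  norm_num [Finset.sum_Icc_succ_top, cP_zero, v1_m3, v1_m2, v1_m1, v1_0, v1_1, v1_2, v1_3, v2_m3, v2_m2, v2_m1, v2_0, v2_1, v2_2, v2_3, v3_m3, v3_m2, v3_m1, v3_0, v3_1, v3_2, v3_3, v4_m3, v4_m2, v4_m1, v4_0, v4_1, v4_2, v4_3, v5_m3, v5_m2, v5_m1, v5_0, v5_1, v5_2, v5_3, v6_m3, v6_m2, v6_m1, v6_0, v6_1, v6_2, v6_3, v7_m3, v7_m2, v7_m1, v7_0, v7_1, v7_2, v7_3, v8_m3, v8_m2, v8_m1, v8_0, v8_1, v8_2, v8_3, v9_m3, v9_m2]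

lemma v9_0 : (P 9 0).card = 116 := by
  rw [show (9:ℕ) = 8+1 from rfl, cP_succ]
  norm_num [Finset.sum_Icc_succ_top, cP_zero, v1_m3, v1_m2, v1_m1, v1_0, v1_1, v1_2, v1_3, v2_m3, v2_m2, v2_m1, v2_0, v2_1, v2_2, v2_3, v3_m3, v3_m2, v3_m1, v3_0, v3_1, v3_2, v3_3, v4_m3, v4_m2, v4_m1, v4_0, v4_1, v4_2, v4_3, v5_m3, v5_m2, v5_m1, v5_0, v5_1, v5_2, v5_3, v6_m3, v6_m2, v6_m1, v6_0, v6_1, v6_2, v6_3, v7_m3, v7_m2, v7_m1, v7_0, v7_1, v7_2, v7_3, v8_m3, v8_m2, v8_m1, v8_0, v8_1, v8_2, v8_3, v9_m3, v9_m2, v9_m1]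

lemma v9_1 : (P 9 1).card = 48 := by
  rw [show (9:ℕ) = 8+1 from rfl, cP_succ]
  norm_num [Finset.sum_Icc_succ_top, cP_zero, v1_m3, v1_m2, v1_m1, v1_0, v1_1, v1_2, v1_3, v2_m3, v2_m2, v2_m1, v2_0, v2_1, v2_2, v2_3, v3_m3, v3_m2, v3_m1, v3_0, v3_1, v3_2, v3_3, v4_m3, v4_m2, v4_m1, v4_0, v4_1, v4_2, v4_3, v5_m3, v5_m2, v5_m1, v5_0, v5_1, v5_2, v5_3, v6_m3, v6_m2, v6_m1, v6_0, v6_1, v6_2, v6_3, v7_m3, v7_m2, v7_m1, v7_0, v7_1, v7_2, v7_3, v8_m3, v8_m2, v8_m1, v8_0, v8_1, v8_2, v8_3, v9_m3, v9_m2, v9_m1, v9_0]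

lemma v9_2 : (P 9 2).card = 48 := by
  rw [show (9:ℕ) = 8+1 from rfl, cP_succ]
  norm_num [Finset.sum_Icc_succ_top, cP_zero, v1_m3, v1_m2, v1_m1, v1_0, v1_1, v1_2, v1_3, v2_m3, v2_m2, v2_m1, v2_0, v2_1, v2_2, v2_3, v3_m3, v3_m2, v3_m1, v3_0, v3_1, v3_2, v3_3, v4_m3, v4_m2, v4_m1, v4_0, v4_1, v4_2, v4_3, v5_m3, v5_m2, v5_m1, v5_0, v5_1, v5_2, v5_3, v6_m3, v6_m2, v6_m1, v6_0, v6_1, v6_2, v6_3, v7_m3, v7_m2, v7_m1, v7_0, v7_1, v7_2, v7_3, v8_m3, v8_m2, v8_m1, v8_0, v8_1, v8_2, v8_3, v9_m3, v9_m2, v9_m1, v9_0, v9_1]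

lemma v9_3 : (P 9 3).card = 0 := by
  rw [show (9:ℕ) = 8+1 from rfl, cP_succ]
  norm_num [Finset.sum_Icc_succ_top, cP_zero, v1_m3, v1_m2, v1_m1, v1_0, v1_1, v1_2, v1_3, v2_m3, v2_m2, v2_m1, v2_0, v2_1, v2_2, v2_3, v3_m3, v3_m2, v3_m1, v3_0, v3_1, v3_2, v3_3, v4_m3, v4_m2, v4_m1, v4_0, v4_1, v4_2, v4_3, v5_m3, v5_m2, v5_m1, v5_0, v5_1, v5_2, v5_3, v6_m3, v6_m2, v6_m1, v6_0, v6_1, v6_2, v6_3, v7_m3, v7_m2, v7_m1, v7_0, v7_1, v7_2, v7_3, v8_m3, v8_m2, v8_m1, v8_0, v8_1, v8_2, v8_3, v9_m3, v9_m2, v9_m1, v9_0, v9_1, v9_2]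

lemma key : ∀ m : ℕ, ∀ s : ℤ, -3 ≤ s → s ≤ 3 → (1 ≤ m ∨ s = -3) →
    ((P (m+4) s).card : ℤ) = 4 * ((P (m+2) s).card : ℤ) - 2 * ((P m s).card : ℤ) := by
  intro m
  induction m using Nat.strong_induction_on with
  | _ m IH =>
    intro s hs1 hs2 hm
    by_cases hbig : 6 ≤ m
    · obtain ⟨n, rfl⟩ : ∃ n, m = n + 6 := ⟨m - 6, by omega⟩
      rw [show n+6+4 = (n+9)+1 from rfl, show n+6+2 = (n+7)+1 from rfl,
        show n+6 = (n+5)+1 from rfl, cP_succ, cP_succ, cP_succ]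
      push_cast
      rw [Finset.mul_sum, Finset.mul_sum, ← Finset.sum_sub_distrib]
      refine Finset.sum_congr rfl fun k hk => ?_
      rw [Finset.mem_Icc] at hk
      by_cases hc : |s + (k:ℤ)| ≤ 3
      · have hc' := abs_le.mp hc
        rw [if_pos ⟨by omega, hc⟩, if_pos ⟨by omega, hc⟩, if_pos ⟨by omega, hc⟩]
        have e1 : n+9+1-k = (n+6-k)+4 := by omega
        have e2 : n+7+1-k = (n+6-k)+2 := by omega
        have e3 : n+5+1-k = n+6-k := by omega
        rw [e1, e2, e3]
        refine IH (n+6-k) (by omega) _ (by omega) (by omega) ?_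
        rcases Nat.lt_or_ge k 6 with h6 | h6
        · left; omega
        · right
          have : (k:ℤ) = 6 := by exact_mod_cast (by omega : k = 6)
          omega
      · rw [if_neg (by tauto), if_neg (by tauto), if_neg (by tauto)]
        ring
    · have hsm : ∃ t : ℕ, s = (t:ℤ) - 3 ∧ t ≤ 6 := ⟨(s+3).toNat, by omega, by omega⟩
      obtain ⟨t, rfl, ht⟩ := hsm
      interval_cases m <;> interval_cases t <;>
        first | omega | norm_num [cP_zero, v1_m3, v1_m2, v1_m1, v1_0, v1_1, v1_2, v1_3, v2_m3, v2_m2, v2_m1, v2_0, v2_1, v2_2, v2_3, v3_m3, v3_m2, v3_m1, v3_0, v3_1, v3_2, v3_3, v4_m3, v4_m2, v4_m1, v4_0, v4_1, v4_2, v4_3, v5_m3, v5_m2, v5_m1, v5_0, v5_1, v5_2, v5_3, v6_m3, v6_m2, v6_m1, v6_0, v6_1, v6_2, v6_3, v7_m3, v7_m2, v7_m1, v7_0, v7_1, v7_2, v7_3, v8_m3, v8_m2, v8_m1, v8_0, v8_1, v8_2, v8_3, v9_m3, v9_m2, v9_m1, v9_0, v9_1, v9_2, v9_3]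

lemma aSum_zero (α : List ℕ) : aSum α 0 = 0 := by simp [aSum]

lemma aSum_cons (a : ℕ) (l : List ℕ) (k : ℕ) :
    aSum (a :: l) (k+1) = (a : ℤ) - aSum l k := by
  unfold aSum
  rw [Finset.sum_range_succ']
  simp only [List.getD_cons_succ, List.getD_cons_zero, pow_zero, one_mul, pow_succ,
    mul_comm ((-1:ℤ)^ _) (-1:ℤ), neg_one_mul, neg_mul]
  rw [Finset.sum_neg_distrib]
  ring

lemma aSum_stab (α : List ℕ) (k : ℕ) (h : α.length ≤ k) : aSum α k = aSum α α.length := by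
  unfold aSum
  refine (Finset.sum_subset (by simp [Finset.range_subset, h]; intro x hx; omega) fun i _ hi => ?_).symm
  simp only [Finset.mem_range, not_lt] at hi
  rw [List.getD_eq_default _ _ hi]
  simp

lemma good_iff (α : List ℕ) : ∀ s : ℤ, Good s α ↔
    (∀ a ∈ α, 0 < a) ∧ (∀ k, 1 ≤ k → k ≤ α.length → |s + aSum α k| ≤ 3) ∧
      |s + aSum α α.length| ≤ 1 := by
  induction α with
  | nil => intro s; simp [Good, aSum]; intro _ k h1 h2; omega
  | cons a l ih =>
    intro s
    show (0 < a ∧ |s + (a:ℤ)| ≤ 3 ∧ Good (-(s + (a:ℤ))) l) ↔ _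
    rw [ih]
    constructor
    · rintro ⟨ha, h3, hpos, hpart, hfin⟩
      refine ⟨by simpa [ha] using hpos, ?_, ?_⟩
      · intro k hk1 hk2
        obtain ⟨j, rfl⟩ : ∃ j, k = j + 1 := ⟨k - 1, by omega⟩
        rw [aSum_cons]
        rcases Nat.eq_zero_or_pos j with rfl | hj
        · simpa [aSum_zero] using h3
        · have := hpart j hj (by simpa using hk2)
          calc |s + ((a:ℤ) - aSum l j)| = |-(s + ((a:ℤ) - aSum l j))| := (abs_neg _).symm
          _ = |-(s + (a:ℤ)) + aSum l j| := by ring_nf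
          _ ≤ 3 := this
      · rw [show (a :: l).length = l.length + 1 from rfl, aSum_cons]
        calc |s + ((a:ℤ) - aSum l l.length)| = |-(s + ((a:ℤ) - aSum l l.length))| := (abs_neg _).symm
        _ = |-(s + (a:ℤ)) + aSum l l.length| := by ring_nf
        _ ≤ 1 := hfin
    · rintro ⟨hpos, hpart, hfin⟩
      have h3 : |s + (a:ℤ)| ≤ 3 := by
        have := hpart 1 le_rfl (by simp)
        simpa [aSum_cons, aSum_zero] using this
      refine ⟨hpos a (by simp), h3, fun b hb => hpos b (by simp [hb]), ?_, ?_⟩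
      · intro k hk1 hk2
        have := hpart (k+1) (by omega) (by simpa using Nat.succ_le_succ hk2)
        rw [aSum_cons] at this
        calc |-(s + (a:ℤ)) + aSum l k| = |-(-(s + (a:ℤ)) + aSum l k)| := (abs_neg _).symm
        _ = |s + ((a:ℤ) - aSum l k)| := by ring_nf
        _ ≤ 3 := this
      · rw [show (a :: l).length = l.length + 1 from rfl, aSum_cons] at hfin
        calc |-(s + (a:ℤ)) + aSum l l.length| = |-(-(s + (a:ℤ)) + aSum l l.length)| := (abs_neg _).symm
        _ = |s + ((a:ℤ) - aSum l l.length)| := by ring_nf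
        _ ≤ 1 := hfin

lemma isDev_iff (m : ℕ) (α : List ℕ) : IsDevSet m 3 α ↔ α.sum = m ∧ Good 0 α := by
  rw [good_iff]
  show ((∀ a ∈ α, 0 < a) ∧ α.sum = m ∧ |aSum α α.length| ≤ 1 ∧ ∀ k : ℕ, |aSum α k| ≤ 3) ↔ _
  simp only [zero_add]
  constructor
  · rintro ⟨hpos, hsum, hfin, hall⟩
    exact ⟨hsum, hpos, fun k _ _ => hall k, hfin⟩
  · rintro ⟨hsum, hpos, hpart, hfin⟩
    refine ⟨hpos, hsum, hfin, fun k => ?_⟩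
    rcases Nat.eq_zero_or_pos k with rfl | hk
    · simp [aSum_zero]
    · rcases le_or_gt k α.length with h | h
      · exact hpart k hk h
      · rw [aSum_stab α k h.le]
        linarith [hfin]

lemma P_zero (s : ℤ) : P 0 s = if |s| ≤ 1 then {[]} else ∅ := by rw [P.eq_def]

lemma P_succ (m : ℕ) (s : ℤ) : P (m+1) s = (Finset.Icc 1 6).attach.biUnion fun k =>
      if (k:ℕ) ≤ m+1 ∧ |s + ((k:ℕ):ℤ)| ≤ 3 then
        (P (m+1-(k:ℕ)) (-(s+((k:ℕ):ℤ)))).image ((k:ℕ) :: ·) else ∅ := by rw [P.eq_def]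

lemma mem_P_iff : ∀ m : ℕ, ∀ s : ℤ, -3 ≤ s → ∀ α : List ℕ,
    (α ∈ P m s ↔ α.sum = m ∧ Good s α) := by
  intro m
  induction m using Nat.strong_induction_on with
  | _ m IH =>
    intro s hs α
    match m with
    | 0 =>
      rw [P_zero]
      have hnil : α.sum = 0 ∧ Good s α → α = [] := by
        rintro ⟨hsum, hg⟩
        cases α with
        | nil => rfl
        | cons a l =>
          obtain ⟨ha, -, -⟩ := hg
          simp [List.sum_cons] at hsum
          omega
      split_ifs with h
      · simp only [Finset.mem_singleton]
        constructor
        · rintro rfl; exact ⟨rfl, h⟩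
        · exact hnil
      · simp only [Finset.notMem_empty, false_iff]
        intro hc
        have := hnil hc
        subst this
        exact h hc.2
    | (n+1) =>
      rw [P_succ]
      simp only [Finset.mem_biUnion, Finset.mem_attach, true_and, Subtype.exists]
      constructor
      · rintro ⟨k, hk, hmem⟩
        rw [Finset.mem_Icc] at hk
        split_ifs at hmem with hc
        · obtain ⟨hkn, hks⟩ := hc
          simp only [Finset.mem_image] at hmem
          obtain ⟨β, hβ, rfl⟩ := hmem
          have hks' := abs_le.mp hks
          have hβ' := (IH (n+1-k) (by omega) (-(s+(k:ℤ))) (by omega) β).1 hβ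
          refine ⟨?_, by omega, hks, hβ'.2⟩
          simp only [List.sum_cons, hβ'.1]
          omega
        · exact absurd hmem (Finset.notMem_empty _)
      · rintro ⟨hsum, hg⟩
        cases α with
        | nil => simp at hsum
        | cons a l =>
          obtain ⟨ha, hsk, hgl⟩ := hg
          have hsk' := abs_le.mp hsk
          have ha6 : a ≤ 6 := by
            have : (a:ℤ) ≤ 6 := by omega
            exact_mod_cast this
          have han : a ≤ n+1 := by
            simp only [List.sum_cons] at hsum
            omega
          refine ⟨a, Finset.mem_Icc.mpr ⟨ha, ha6⟩, ?_⟩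
          rw [if_pos ⟨han, hsk⟩]
          simp only [Finset.mem_image]
          refine ⟨l, ?_, rfl⟩
          refine ((IH (n+1-a) (by omega) (-(s+(a:ℤ))) (by omega) l)).2 ⟨?_, hgl⟩
          simp only [List.sum_cons] at hsum
          omega

lemma zeta_eq (m : ℕ) : zeta m 3 = (P m 0).card := by
  unfold zeta
  have e : ∀ α : List ℕ, IsDevSet m 3 α ↔ α ∈ P m 0 := fun α =>
    (isDev_iff m α).trans (mem_P_iff m 0 (by norm_num) α).symm
  rw [Nat.card_congr (Equiv.subtypeEquivRight e)]
  exact Nat.card_eq_finsetCard _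

lemma main : ∀ m : ℕ, 1 ≤ m → ((P m 0).card : ℝ) =
    ((2 + Real.sqrt 2) ^ ((m + 1) / 2) + (2 - Real.sqrt 2) ^ ((m + 1) / 2)) / 4 := by
  have hx : Real.sqrt 2 * Real.sqrt 2 = 2 := Real.mul_self_sqrt (by norm_num)
  intro m
  induction m using Nat.strong_induction_on with
  | _ m IH =>
    intro hm
    by_cases h5 : m ≤ 4
    · interval_cases m
      · rw [v1_0]; norm_num
      · rw [v2_0]; norm_num
      · rw [v3_0]; norm_num; nlinarith [hx]
      · rw [v4_0]; norm_num; nlinarith [hx]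
    · obtain ⟨n, rfl⟩ : ∃ n, m = n + 5 := ⟨m - 5, by omega⟩
      have hk := key (n+1) 0 (by norm_num) (by norm_num) (Or.inl (by omega))
      simp only [show n+1+4 = n+5 from by omega, show n+1+2 = n+3 from by omega] at hk
      have hkR : ((P (n+5) 0).card : ℝ) =
          4 * ((P (n+3) 0).card : ℝ) - 2 * ((P (n+1) 0).card : ℝ) := by exact_mod_cast hk
      rw [hkR, IH (n+3) (by omega) (by omega), IH (n+1) (by omega) (by omega)]
      have e1 : (n+3+1)/2 = (n+1+1)/2 + 1 := by omega
      have e2 : (n+5+1)/2 = (n+1+1)/2 + 2 := by omega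
      rw [e1, e2]
      set N := (n+1+1)/2 with hN
      have ha : (2 + Real.sqrt 2)^(N+2) = 4*(2+Real.sqrt 2)^(N+1) - 2*(2+Real.sqrt 2)^N := by
        have h2 : (2 + Real.sqrt 2)^2 = 4*(2+Real.sqrt 2) - 2 := by nlinarith [hx]
        calc (2 + Real.sqrt 2)^(N+2) = (2+Real.sqrt 2)^N * (2+Real.sqrt 2)^2 := by ring
        _ = (2+Real.sqrt 2)^N * (4*(2+Real.sqrt 2) - 2) := by rw [h2]
        _ = 4*(2+Real.sqrt 2)^(N+1) - 2*(2+Real.sqrt 2)^N := by ring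
      have hb : (2 - Real.sqrt 2)^(N+2) = 4*(2-Real.sqrt 2)^(N+1) - 2*(2-Real.sqrt 2)^N := by
        have h2 : (2 - Real.sqrt 2)^2 = 4*(2-Real.sqrt 2) - 2 := by nlinarith [hx]
        calc (2 - Real.sqrt 2)^(N+2) = (2-Real.sqrt 2)^N * (2-Real.sqrt 2)^2 := by ring
        _ = (2-Real.sqrt 2)^N * (4*(2-Real.sqrt 2) - 2) := by rw [h2]
        _ = 4*(2-Real.sqrt 2)^(N+1) - 2*(2-Real.sqrt 2)^N := by ring
      rw [ha, hb]; ring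

/-- `ζ(m,3) = ((2+√2)^⌊(m+1)/2⌋ + (2−√2)^⌊(m+1)/2⌋)/4` for all `m ≥ 1`. -/
theorem zeta_three (m : ℕ) (hm : 1 ≤ m) :
    (zeta m 3 : ℝ) =
      ((2 + Real.sqrt 2) ^ ((m + 1) / 2) + (2 - Real.sqrt 2) ^ ((m + 1) / 2)) / 4 := by
  rw [zeta_eq m]
  exact main m hm
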